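/- Let x = (a,b,c,d) ∈ ℤ⁴ and P(x) = b²c² + 18abcd − 4ac³ − 4b³d − 27a²d². Then P(x) ≡ 1 (mod 8) if and only if either (a and d are even and b and c are odd) or (a and d are odd and b + c is odd). -/

import Mathlib

/-- Discriminant of an integral binary cubic form with coefficients `(a, b, c, d)`. -/
def discZ (a b c d : ℤ) : ℤ :=
  b ^ 2 * c ^ 2 + 18 * a * b * c * d - 4 * a * c ^ 3 - 4 * b ^ 3 * d - 27 * a ^ 2 * d ^ 2

private def f8 (x : ZMod 8) : ZMod 2 := (x.val : ZMod 2)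

private lemma key (A B C D : ZMod 8) :
    (B ^ 2 * C ^ 2 + 18 * A * B * C * D - 4 * A * C ^ 3 - 4 * B ^ 3 * D - 27 * A ^ 2 * D ^ 2 = 1) ↔
      ((f8 A = 0 ∧ f8 D = 0 ∧ f8 B = 1 ∧ f8 C = 1) ∨
        (f8 A = 1 ∧ f8 D = 1 ∧ f8 (B + C) = 1)) := by
  revert A B C D; decide

private lemma even_iff_f8 (a : ℤ) : Even a ↔ f8 (a : ZMod 8) = 0 := by
  unfold f8
  rw [ZMod.natCast_eq_zero_iff]
  have hv : (((a : ZMod 8).val : ℤ)) = a % 8 := ZMod.val_intCast a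
  rw [Int.even_iff, ← Int.natCast_dvd_natCast]
  push_cast
  omega

private lemma odd_iff_f8 (a : ℤ) : Odd a ↔ f8 (a : ZMod 8) = 1 := by
  rw [← Int.not_even_iff_odd, even_iff_f8]
  generalize f8 (a : ZMod 8) = x
  revert x; decide

theorem stmt1 (a b c d : ℤ) :
    discZ a b c d ≡ 1 [ZMOD 8] ↔
      (Even a ∧ Even d ∧ Odd b ∧ Odd c) ∨ (Odd a ∧ Odd d ∧ Odd (b + c)) := by
  rw [show ((8:ℤ)) = ((8:ℕ):ℤ) by norm_num, ← ZMod.intCast_eq_intCast_iff]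
  have : ((discZ a b c d : ZMod 8)) =
      ((b:ZMod 8)) ^ 2 * (c:ZMod 8) ^ 2 + 18 * (a:ZMod 8) * b * c * d - 4 * a * (c:ZMod 8) ^ 3
        - 4 * (b:ZMod 8) ^ 3 * d - 27 * (a:ZMod 8) ^ 2 * (d:ZMod 8) ^ 2 := by
    unfold discZ; push_cast; ring
  rw [show ((1:ℤ) : ZMod 8) = 1 by norm_num, this, key]
  rw [even_iff_f8, even_iff_f8, odd_iff_f8, odd_iff_f8, odd_iff_f8, odd_iff_f8, odd_iff_f8]
  push_cast
  tauto
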